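/- For every real number C ≥ 1 there exists a real constant C'' ≥ 1 (depending only on C) such that for every integer k ≥ C, writing N₀ = ⌊(k/C)^{1/2}⌋, and for every integer N with 1 ≤ N ≤ N₀ − 1: ∑_{j=N}^{N₀−1} C^j (j!)² / k^j ≤ C''^N (N!)² / k^N. -/

import Mathlib

open Finset

private lemma fact_le_pair (N : ℕ) : ∀ m : ℕ,
    (((N + m).factorial : ℝ)) ≤ (N.factorial : ℝ) * ((2*(N:ℝ) + m + 1)/2)^m := by
  intro m
  induction m with
  | zero => simp
  | succ m ih =>
    have hc : (0:ℝ) < (2*(N:ℝ) + m + 1)/2 := by positivity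
    set c : ℝ := (2*(N:ℝ) + m + 1)/2 with hcdef
    have hcne : c ≠ 0 := ne_of_gt hc
    have step : (((N + (m+1)).factorial : ℝ)) = ((N:ℝ) + m + 1) * ((N + m).factorial : ℝ) := by
      have : N + (m+1) = (N+m) + 1 := by ring
      rw [this, Nat.factorial_succ]
      push_cast; ring
    rw [step]
    have h1 : ((N:ℝ) + m + 1) * ((N + m).factorial : ℝ)
        ≤ ((N:ℝ) + m + 1) * ((N.factorial : ℝ) * c^m) :=
      mul_le_mul_of_nonneg_left ih (by positivity)
    refine h1.trans ?_
    have key : ((N:ℝ) + m + 1) * c ^ m ≤ ((2*(N:ℝ) + (m+1) + 1)/2) ^ (m+1) := by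
      have h0 : (0:ℝ) ≤ 1/(2*c) := by positivity
      have h2 := one_add_mul_le_pow (a := 1/(2*c)) (by linarith) (m+1)
      have h3 : c^(m+1) * ((1:ℝ) + ((m:ℝ)+1) * (1/(2*c))) ≤ c^(m+1) * (1 + 1/(2*c))^(m+1) := by
        push_cast at h2
        exact mul_le_mul_of_nonneg_left h2 (by positivity)
      have e1 : c^(m+1) * ((1:ℝ) + ((m:ℝ)+1) * (1/(2*c))) = ((N:ℝ)+m+1) * c^m := by
        rw [hcdef]
        field_simp
        ring
      have e2 : c^(m+1) * (1 + 1/(2*c))^(m+1) = ((2*(N:ℝ) + (m+1) + 1)/2)^(m+1) := by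
        rw [← mul_pow]
        congr 1
        rw [hcdef]
        field_simp
        ring
      rw [e1, e2] at h3
      exact h3
    calc ((N:ℝ) + m + 1) * ((N.factorial : ℝ) * c^m)
        = (N.factorial : ℝ) * (((N:ℝ) + m + 1) * c^m) := by ring
      _ ≤ (N.factorial : ℝ) * ((2*(N:ℝ) + (m+1) + 1)/2)^(m+1) :=
          mul_le_mul_of_nonneg_left key (by positivity)
      _ = (N.factorial : ℝ) * ((2*(N:ℝ) + ((m+1:ℕ):ℝ) + 1)/2)^(m+1) := by push_cast; ring

private lemma fact_le_lin (N : ℕ) : ∀ m : ℕ,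
    (((N + m).factorial : ℝ)) ≤ (N.factorial : ℝ) * ((N:ℝ) + m)^m := by
  intro m
  induction m with
  | zero => simp
  | succ m ih =>
    have step : (((N + (m+1)).factorial : ℝ)) = ((N:ℝ) + m + 1) * ((N + m).factorial : ℝ) := by
      have : N + (m+1) = (N+m) + 1 := by ring
      rw [this, Nat.factorial_succ]
      push_cast; ring
    rw [step]
    calc ((N:ℝ) + m + 1) * ((N + m).factorial : ℝ)
        ≤ ((N:ℝ) + m + 1) * ((N.factorial : ℝ) * ((N:ℝ) + m)^m) :=
          mul_le_mul_of_nonneg_left ih (by positivity)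
      _ ≤ ((N:ℝ) + m + 1) * ((N.factorial : ℝ) * ((N:ℝ) + m + 1)^m) := by
          apply mul_le_mul_of_nonneg_left _ (by positivity)
          apply mul_le_mul_of_nonneg_left _ (by positivity)
          exact pow_le_pow_left₀ (by positivity) (by linarith) m
      _ = (N.factorial : ℝ) * ((N:ℝ) + ((m+1:ℕ):ℝ))^(m+1) := by
          rw [pow_succ]
          push_cast; ring

private lemma term_le_aux (C k : ℝ) (hC : 0 < C) (hk : 0 < k) (N m : ℕ) (B ρ : ℝ)
    (hB0 : 0 ≤ B) (hρ0 : 0 ≤ ρ)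
    (hfac : (((N+m).factorial : ℝ)) ≤ (N.factorial : ℝ) * B^m)
    (hCB : C * B^2 ≤ ρ * k) :
    C^(N+m) * (((N+m).factorial : ℝ))^2 / k^(N+m)
      ≤ C^N * ((N.factorial : ℝ))^2 / k^N * ρ^m := by
  rw [div_le_iff₀ (by positivity)]
  have h1 : C^(N+m) * (((N+m).factorial : ℝ))^2 ≤ C^(N+m) * ((N.factorial : ℝ) * B^m)^2 := by
    apply mul_le_mul_of_nonneg_left _ (by positivity)
    exact pow_le_pow_left₀ (by positivity) hfac 2
  refine h1.trans ?_
  have h2 : C^(N+m) * ((N.factorial : ℝ) * B^m)^2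
      = (C^N * ((N.factorial:ℝ))^2) * (C*B^2)^m := by
    have e : ((B:ℝ)^m)^2 = (B^2)^m := by rw [← pow_mul, ← pow_mul, mul_comm]
    rw [pow_add, mul_pow, e]
    ring
  rw [h2]
  have h3 : (C*B^2)^m ≤ (ρ*k)^m := pow_le_pow_left₀ (by positivity) hCB m
  calc (C^N * ((N.factorial:ℝ))^2) * (C*B^2)^m
      ≤ (C^N * ((N.factorial:ℝ))^2) * (ρ*k)^m :=
        mul_le_mul_of_nonneg_left h3 (by positivity)
    _ = C^N * ((N.factorial:ℝ))^2 / k^N * ρ^m * k^(N+m) := by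
        rw [pow_add, mul_pow]
        field_simp

theorem stmt_3 (C : ℝ) (hC : 1 ≤ C) :
    ∃ C'' : ℝ, 1 ≤ C'' ∧ ∀ k : ℕ, C ≤ (k : ℝ) →
      ∀ N : ℕ, 1 ≤ N → N ≤ Nat.floor (Real.sqrt ((k : ℝ) / C)) - 1 →
        ∑ j ∈ Finset.Icc N (Nat.floor (Real.sqrt ((k : ℝ) / C)) - 1),
            C ^ j * (j.factorial : ℝ) ^ 2 / (k : ℝ) ^ j ≤
          C'' ^ N * (N.factorial : ℝ) ^ 2 / (k : ℝ) ^ N := by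
  refine ⟨6 * C, by linarith, ?_⟩
  intro k hk N hN1 hN2
  have hC0 : (0:ℝ) < C := by linarith
  have hk0 : (0:ℝ) < (k:ℝ) := lt_of_lt_of_le hC0 hk
  set s := Real.sqrt ((k:ℝ)/C) with hs
  set N₀ := Nat.floor s with hN₀def
  have hs0 : 0 ≤ s := Real.sqrt_nonneg _
  have hs2 : s^2 = (k:ℝ)/C := Real.sq_sqrt (by positivity)
  have hCs : C * s^2 = (k:ℝ) := by rw [hs2]; field_simp
  have hfloor : (N₀ : ℝ) ≤ s := Nat.floor_le hs0
  have hNlt : N < N₀ := by omega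
  have hIcc : Finset.Icc N (N₀ - 1) = Finset.Ico N N₀ := by
    rw [← Finset.Ico_add_one_right_eq_Icc]
    congr 1
    omega
  rw [hIcc, Finset.sum_Ico_eq_sum_range]
  set aN : ℝ := C^N * ((N.factorial : ℝ))^2 / (k:ℝ)^N with haN
  have haN0 : 0 ≤ aN := by positivity
  have hmem : ∀ i ∈ Finset.range (N₀ - N), ((N:ℝ) + i + 1) ≤ (N₀ : ℝ) := by
    intro i hi
    rw [Finset.mem_range] at hi
    have : N + i + 1 ≤ N₀ := by omega
    exact_mod_cast this
  have hgoal : (6 * C)^N * ((N.factorial : ℝ))^2 / (k:ℝ)^N = 6^N * aN := by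
    rw [haN, mul_pow]; ring
  rw [hgoal]
  have h6 : (16:ℝ)/7 ≤ 6^N := by
    calc (16:ℝ)/7 ≤ 6^1 := by norm_num
      _ ≤ 6^N := pow_le_pow_right₀ (by norm_num) hN1
  by_cases hcase : 2*(N:ℝ) ≤ s
  · -- geometric case
    have hbound : ∀ i ∈ Finset.range (N₀ - N),
        C^(N+i) * (((N+i).factorial : ℝ))^2 / (k:ℝ)^(N+i) ≤ aN * (9/16)^i := by
      intro i hi
      have hCB : C * ((2*(N:ℝ)+i+1)/2)^2 ≤ (9/16) * (k:ℝ) := by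
        have h1 : (N:ℝ) + i + 1 ≤ s := le_trans (hmem i hi) hfloor
        have h2 : (2*(N:ℝ)+i+1)/2 ≤ (3/4) * s := by linarith
        have h3 : ((2*(N:ℝ)+i+1)/2)^2 ≤ ((3/4)*s)^2 := pow_le_pow_left₀ (by positivity) h2 2
        calc C * ((2*(N:ℝ)+i+1)/2)^2 ≤ C * ((3/4)*s)^2 :=
              mul_le_mul_of_nonneg_left h3 hC0.le
          _ = (9/16) * (C * s^2) := by ring
          _ = (9/16) * (k:ℝ) := by rw [hCs]
      exact term_le_aux C k hC0 hk0 N i _ _ (by positivity) (by norm_num)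
        (fact_le_pair N i) hCB
    calc ∑ i ∈ Finset.range (N₀ - N), C^(N+i) * (((N+i).factorial : ℝ))^2 / (k:ℝ)^(N+i)
        ≤ ∑ i ∈ Finset.range (N₀ - N), aN * (9/16)^i := Finset.sum_le_sum hbound
      _ = aN * ∑ i ∈ Finset.range (N₀ - N), ((9:ℝ)/16)^i := by rw [Finset.mul_sum]
      _ ≤ aN * (16/7) := by
          apply mul_le_mul_of_nonneg_left _ haN0
          have hgs : ∑ i ∈ Finset.range (N₀ - N), ((9:ℝ)/16)^i
              = (((9:ℝ)/16)^(N₀-N) - 1)/((9:ℝ)/16 - 1) := geom_sum_eq (by norm_num) _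
          rw [hgs]
          have hp0 : (0:ℝ) ≤ ((9:ℝ)/16)^(N₀-N) := by positivity
          have hp1 : ((9:ℝ)/16)^(N₀-N) ≤ 1 := pow_le_one₀ (by norm_num) (by norm_num)
          rw [div_le_iff_of_neg (by norm_num : ((9:ℝ)/16 - 1) < 0)]
          nlinarith
      _ ≤ 6^N * aN := by nlinarith
  · -- few terms case
    push_neg at hcase
    have hbound : ∀ i ∈ Finset.range (N₀ - N),
        C^(N+i) * (((N+i).factorial : ℝ))^2 / (k:ℝ)^(N+i) ≤ aN := by
      intro i hi
      have hCB : C * ((N:ℝ)+i)^2 ≤ 1 * (k:ℝ) := by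
        have h1 : (N:ℝ) + i ≤ s := by linarith [hmem i hi, hfloor]
        have h3 : ((N:ℝ)+i)^2 ≤ s^2 := pow_le_pow_left₀ (by positivity) h1 2
        calc C * ((N:ℝ)+i)^2 ≤ C * s^2 := mul_le_mul_of_nonneg_left h3 hC0.le
          _ = 1 * (k:ℝ) := by rw [hCs]; ring
      have := term_le_aux C k hC0 hk0 N i _ _ (by positivity) (by norm_num : (0:ℝ) ≤ 1)
        (fact_le_lin N i) hCB
      simpa using this
    have hcard : ((N₀ - N : ℕ) : ℝ) ≤ 6^N := by
      have hN₀2N : N₀ < 2*N := by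
        by_contra hcon
        push_neg at hcon
        have : 2*(N:ℝ) ≤ (N₀:ℝ) := by exact_mod_cast hcon
        linarith [hfloor]
      have h1 : N₀ - N ≤ N := by omega
      have h2 : (N:ℝ) ≤ 2^N := by
        have := Nat.lt_two_pow_self (n := N)
        exact_mod_cast this.le
      have h3 : (2:ℝ)^N ≤ 6^N := pow_le_pow_left₀ (by norm_num) (by norm_num) N
      calc ((N₀ - N : ℕ) : ℝ) ≤ (N:ℝ) := by exact_mod_cast h1
        _ ≤ 6^N := le_trans h2 h3
    calc ∑ i ∈ Finset.range (N₀ - N), C^(N+i) * (((N+i).factorial : ℝ))^2 / (k:ℝ)^(N+i)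
        ≤ ∑ i ∈ Finset.range (N₀ - N), aN := Finset.sum_le_sum hbound
      _ = ((N₀ - N : ℕ) : ℝ) * aN := by
          rw [Finset.sum_const, Finset.card_range, nsmul_eq_mul]
      _ ≤ 6^N * aN := mul_le_mul_of_nonneg_right hcard haN0
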